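/- For every τ > 0 and x ∈ ℝ, v is twice differentiable in τ at (τ,x) and satisfies the Black–Scholes greek relation ∂²_τ v(τ,x) = (−1/(2τ) + x²/(2τ²) − 1/8) · ∂_τ v(τ,x). -/

import Mathlib

open MeasureTheory

/-- Standard normal cumulative distribution function. -/
noncomputable def stdN (y : ℝ) : ℝ :=
  ∫ u in Set.Iio y, Real.exp (-u ^ 2 / 2) / Real.sqrt (2 * Real.pi)

/-- Standard normal density. -/
noncomputable def stdn (y : ℝ) : ℝ :=
  Real.exp (-y ^ 2 / 2) / Real.sqrt (2 * Real.pi)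

/-- Unit-volatility Black–Scholes price in reduced variables. -/
noncomputable def bsv (τ x : ℝ) : ℝ :=
  Real.exp x * stdN (x / Real.sqrt τ + Real.sqrt τ / 2) -
    stdN (x / Real.sqrt τ - Real.sqrt τ / 2)

lemma gauss_int : MeasureTheory.Integrable (fun u : ℝ => Real.exp (-u ^ 2 / 2) / Real.sqrt (2 * Real.pi)) := by
  have h := integrable_exp_neg_mul_sq (b := (1:ℝ)/2) (by norm_num)
  have : (fun u : ℝ => Real.exp (-u ^ 2 / 2) / Real.sqrt (2 * Real.pi))
      = fun u : ℝ => Real.exp (-(1/2) * u ^ 2) * (Real.sqrt (2 * Real.pi))⁻¹ := by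
    funext u; rw [div_eq_mul_inv]; ring_nf
  rw [this]
  exact h.mul_const _

lemma stdn_cont : Continuous stdn := by
  unfold stdn
  exact (Real.continuous_exp.comp (by continuity)).div_const _

lemma hasDerivAt_stdN (y : ℝ) : HasDerivAt stdN (stdn y) y := by
  have key : ∀ z : ℝ, stdN z = stdN 0 + ∫ u in (0:ℝ)..z, stdn u := by
    intro z
    have h1 : stdN z = ∫ u in Set.Iic z, stdn u := by
      unfold stdN stdn
      exact setIntegral_congr_set Iio_ae_eq_Iic
    have h2 : stdN 0 = ∫ u in Set.Iic (0:ℝ), stdn u := by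
      unfold stdN stdn
      exact setIntegral_congr_set Iio_ae_eq_Iic
    have h3 := intervalIntegral.integral_Iic_sub_Iic (f := stdn) (a := (0:ℝ)) (b := z)
      (μ := volume) gauss_int.integrableOn gauss_int.integrableOn
    rw [h1, h2]; linarith
  have : HasDerivAt (fun z => stdN 0 + ∫ u in (0:ℝ)..z, stdn u) (stdn y) y := by
    have := intervalIntegral.integral_hasDerivAt_right
      (gauss_int.intervalIntegrable (a := 0) (b := y))
      (stdn_cont.stronglyMeasurableAtFilter _ _)
      stdn_cont.continuousAt
    exact this.const_add _
  exact this.congr_of_eventuallyEq (Filter.Eventually.of_forall fun z => key z)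

lemma hasDerivAt_stdn (y : ℝ) : HasDerivAt stdn (-y * stdn y) y := by
  have h1 : HasDerivAt (fun y : ℝ => -y ^ 2 / 2) (-y) y := by
    have := ((hasDerivAt_pow 2 y).neg.div_const 2)
    simpa using this.congr_deriv (by ring)
  have h2 := (h1.exp).div_const (Real.sqrt (2 * Real.pi))
  unfold stdn
  refine h2.congr_deriv ?_
  ring

lemma bsv_deriv (x t : ℝ) (ht : 0 < t) :
    HasDerivAt (fun u => bsv u x)
      (stdn (x / Real.sqrt t - Real.sqrt t / 2) / (2 * Real.sqrt t)) t := by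
  set s := Real.sqrt t with hs_def
  have hs0 : 0 < s := Real.sqrt_pos.mpr ht
  have hs : HasDerivAt Real.sqrt (1 / (2 * s)) t := Real.hasDerivAt_sqrt ht.ne'
  have hd : HasDerivAt (fun u => x / Real.sqrt u)
      ((0 * s - x * (1 / (2 * s))) / s ^ 2) t :=
    (hasDerivAt_const t x).div hs hs0.ne'
  have hp : HasDerivAt (fun u => x / Real.sqrt u + Real.sqrt u / 2)
      ((0 * s - x * (1 / (2 * s))) / s ^ 2 + (1 / (2 * s)) / 2) t :=
    hd.add (hs.div_const 2)
  have hm : HasDerivAt (fun u => x / Real.sqrt u - Real.sqrt u / 2)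
      ((0 * s - x * (1 / (2 * s))) / s ^ 2 - (1 / (2 * s)) / 2) t :=
    hd.sub (hs.div_const 2)
  have hNp : HasDerivAt (fun u => stdN (x / Real.sqrt u + Real.sqrt u / 2))
      (stdn (x / s + s / 2) * ((0 * s - x * (1 / (2 * s))) / s ^ 2 + (1 / (2 * s)) / 2)) t :=
    (hasDerivAt_stdN (x / s + s / 2)).comp (h₂ := stdN) t hp
  have hNm : HasDerivAt (fun u => stdN (x / Real.sqrt u - Real.sqrt u / 2))
      (stdn (x / s - s / 2) * ((0 * s - x * (1 / (2 * s))) / s ^ 2 - (1 / (2 * s)) / 2)) t :=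
    (hasDerivAt_stdN (x / s - s / 2)).comp (h₂ := stdN) t hm
  have h := (hNp.const_mul (Real.exp x)).sub hNm
  have hid : Real.exp x * stdn (x / s + s / 2) = stdn (x / s - s / 2) := by
    unfold stdn
    rw [div_eq_mul_inv, ← mul_assoc, ← Real.exp_add, div_eq_mul_inv]
    congr 2
    field_simp
    ring
  refine h.congr_deriv ?_
  have : Real.exp x * (stdn (x / s + s / 2) *
      ((0 * s - x * (1 / (2 * s))) / s ^ 2 + (1 / (2 * s)) / 2))
      = stdn (x / s - s / 2) * ((0 * s - x * (1 / (2 * s))) / s ^ 2 + (1 / (2 * s)) / 2) := by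
    rw [← mul_assoc, hid]
  rw [this]
  field_simp
  ring


/-- Black–Scholes greek relation `∂²_τ v(τ,x) = (−1/(2τ) + x²/(2τ²) − 1/8) ∂_τ v(τ,x)`. -/
theorem bsv_second_deriv_tau (τ x : ℝ) (hτ : 0 < τ) :
    ∃ vτ vττ : ℝ,
      HasDerivAt (fun t => bsv t x) vτ τ ∧
      HasDerivAt (fun t => deriv (fun s => bsv s x) t) vττ τ ∧
      vττ = (-(1 / (2 * τ)) + x ^ 2 / (2 * τ ^ 2) - 1 / 8) * vτ := by
  set s := Real.sqrt τ with hs_def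
  have hs0 : 0 < s := Real.sqrt_pos.mpr hτ
  have ht2 : s ^ 2 = τ := Real.sq_sqrt hτ.le
  have hs : HasDerivAt Real.sqrt (1 / (2 * s)) τ := Real.hasDerivAt_sqrt hτ.ne'
  have hd : HasDerivAt (fun u => x / Real.sqrt u)
      ((0 * s - x * (1 / (2 * s))) / s ^ 2) τ :=
    (hasDerivAt_const τ x).div hs hs0.ne'
  have hm : HasDerivAt (fun u => x / Real.sqrt u - Real.sqrt u / 2)
      ((0 * s - x * (1 / (2 * s))) / s ^ 2 - (1 / (2 * s)) / 2) τ :=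
    hd.sub (hs.div_const 2)
  have hNum : HasDerivAt (fun u => stdn (x / Real.sqrt u - Real.sqrt u / 2))
      (-(x / s - s / 2) * stdn (x / s - s / 2) *
        ((0 * s - x * (1 / (2 * s))) / s ^ 2 - (1 / (2 * s)) / 2)) τ :=
    (hasDerivAt_stdn (x / s - s / 2)).comp (h₂ := stdn) τ hm
  have hDen : HasDerivAt (fun u => 2 * Real.sqrt u) (2 * (1 / (2 * s))) τ :=
    hs.const_mul 2
  have hf : HasDerivAt (fun u => stdn (x / Real.sqrt u - Real.sqrt u / 2) / (2 * Real.sqrt u))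
      ((-(x / s - s / 2) * stdn (x / s - s / 2) *
          ((0 * s - x * (1 / (2 * s))) / s ^ 2 - (1 / (2 * s)) / 2) * (2 * s)
        - stdn (x / s - s / 2) * (2 * (1 / (2 * s)))) / (2 * s) ^ 2) τ :=
    hNum.div hDen (by positivity)
  refine ⟨stdn (x / s - s / 2) / (2 * s),
    (-(x / s - s / 2) * stdn (x / s - s / 2) *
          ((0 * s - x * (1 / (2 * s))) / s ^ 2 - (1 / (2 * s)) / 2) * (2 * s)
        - stdn (x / s - s / 2) * (2 * (1 / (2 * s)))) / (2 * s) ^ 2,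
    bsv_deriv x τ hτ, ?_, ?_⟩
  · have heq : (fun u => deriv (fun v => bsv v x) u)
        =ᶠ[nhds τ] fun u => stdn (x / Real.sqrt u - Real.sqrt u / 2) / (2 * Real.sqrt u) := by
      filter_upwards [isOpen_Ioi.mem_nhds (show τ ∈ Set.Ioi (0:ℝ) from hτ)] with u hu
      exact (bsv_deriv x u hu).deriv
    exact hf.congr_of_eventuallyEq heq
  · rw [← ht2]
    field_simp
    ring
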